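/- Let D ⊆ ℂ be an open vertical strip, K ⊆ D compact with connected complement, and suppose Z : ℂ → ℂ satisfies: for every ε > 0 and every zero-free continuous f on K analytic in the interior of K, liminf_{N→∞} (1/N)·#{1 ≤ n ≤ N : max_{s∈K}|Z(s+inα) − f(s)| < ε} > 0, for some fixed α > 0 (α-discrete universality on every admissible K ⊆ D). Then for every admissible K, ε > 0, and admissible f, liminf_{T→∞} (1/T)·meas{0 ≤ t ≤ T : max_{s∈K}|Z(s+it) − f(s)| < ε} ≥ ξ₁·α^{-1}·min(α, 2δ), where ξ₁ is the discrete lower density obtained for the approximant g = e^p (p a polynomial with max_{s∈K}|e^p − f| < ε/4) on an enlarged compact set K₀ ⊇ K with dist(K, ℂ∖K₀) > δ, applied with accuracy ε/2, and δ > 0 is chosen by uniform continuity of g so that |g(s+iτ) − g(s)| < ε/4 for all s ∈ K, |τ| ≤ δ. -/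

import Mathlib

open MeasureTheory Filter
open scoped ENNReal

/-- The discrete "good" set of indices `n ≤ N` where `Z(s+inα)` approximates `e^p` on `K₀`. -/
def Aset19 (Z : ℂ → ℂ) (α ε : ℝ) (K₀ : Set ℂ) (p : Polynomial ℂ) (N : ℕ) : Set ℕ :=
  {n : ℕ | 1 ≤ n ∧ n ≤ N ∧ ∀ s ∈ K₀,
    ‖Z (s + (((n : ℝ) * α : ℝ) : ℂ) * Complex.I)
      - Complex.exp (p.eval s)‖ < ε / 2}

/-- The continuous "good" set of times `t ∈ [0,T]` where `Z(s+it)` approximates `f` on `K`. -/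
def Gset19 (Z : ℂ → ℂ) (ε : ℝ) (K : Set ℂ) (f : ℂ → ℂ) (T : ℝ) : Set ℝ :=
  {t : ℝ | 0 ≤ t ∧ t ≤ T ∧ ∀ s ∈ K,
    ‖Z (s + (t : ℂ) * Complex.I) - f s‖ < ε}

set_option maxHeartbeats 1000000 in
/-- Theorem 1, implication (2) → (1): α-discrete zero-free universality of `Z` in the
strip `D` implies continuous zero-free universality in `D`, with the explicit lower
bound `ξ₁ · α⁻¹ · min(α, 2δ)` on the density, where `ξ₁` is the discrete lower density
for the approximant `g = e^p` on the enlarged set `K₀` with accuracy `ε/2`. -/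
theorem stmt_19 (σ₁ σ₂ : EReal) (hσ : σ₁ < σ₂)
    (D : Set ℂ) (hD : D = {s : ℂ | σ₁ < (s.re : EReal) ∧ (s.re : EReal) < σ₂})
    (Z : ℂ → ℂ) (α : ℝ) (hα : 0 < α)
    (hdisc : ∀ K : Set ℂ, IsCompact K → IsConnected Kᶜ → K ⊆ D →
      ∀ ε > (0 : ℝ), ∀ f : ℂ → ℂ, ContinuousOn f K →
        DifferentiableOn ℂ f (interior K) → (∀ s ∈ K, f s ≠ 0) →
        0 < Filter.atTop.liminf (fun N : ℕ =>
          (({n : ℕ | 1 ≤ n ∧ n ≤ N ∧ ∀ s ∈ K,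
            ‖Z (s + (((n : ℝ) * α : ℝ) : ℂ) * Complex.I) - f s‖ < ε}.ncard : ℝ))
            / N)) :
    ∀ K : Set ℂ, IsCompact K → IsConnected Kᶜ → K ⊆ D →
    ∀ ε > (0 : ℝ), ∀ f : ℂ → ℂ, ContinuousOn f K →
      DifferentiableOn ℂ f (interior K) → (∀ s ∈ K, f s ≠ 0) →
    ∀ K₀ : Set ℂ, IsCompact K₀ → IsConnected K₀ᶜ → K ⊆ K₀ → K₀ ⊆ D →
    ∀ δ : ℝ, 0 < δ → (∀ s ∈ K, ∀ z ∉ K₀, δ < dist s z) →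
    ∀ p : Polynomial ℂ,
      (∀ s ∈ K, ‖Complex.exp (p.eval s) - f s‖ < ε / 4) →
      (∀ τ : ℝ, |τ| ≤ δ → ∀ s ∈ K,
        ‖Complex.exp (p.eval (s + (τ : ℂ) * Complex.I))
          - Complex.exp (p.eval s)‖ < ε / 4) →
    ∀ ξ₁ : ℝ,
      ξ₁ = Filter.atTop.liminf (fun N : ℕ =>
        (({n : ℕ | 1 ≤ n ∧ n ≤ N ∧ ∀ s ∈ K₀,
          ‖Z (s + (((n : ℝ) * α : ℝ) : ℂ) * Complex.I)
            - Complex.exp (p.eval s)‖ < ε / 2}.ncard : ℝ)) / N) →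
      ξ₁ * α⁻¹ * min α (2 * δ) ≤ Filter.atTop.liminf (fun T : ℝ =>
        (volume {t : ℝ | 0 ≤ t ∧ t ≤ T ∧ ∀ s ∈ K,
          ‖Z (s + (t : ℂ) * Complex.I) - f s‖ < ε}).toReal / T) := by
  intro K hK hKc hKD ε hε f hf hfd hf0 K₀ hK₀ hK₀c hKK₀ hK₀D δ hδ hdist p hp1 hp2 ξ₁ hξ₁
  -- abbreviations
  set ℓ : ℝ := min α (2 * δ) / 2 with hℓdef
  have hℓpos : 0 < ℓ := by
    have : 0 < min α (2 * δ) := lt_min hα (by linarith)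
    rw [hℓdef]; linarith
  have hℓα : 2 * ℓ ≤ α := by
    have := min_le_left α (2 * δ); rw [hℓdef]; linarith
  have hℓδ : ℓ ≤ δ := by
    have := min_le_right α (2 * δ); rw [hℓdef]; linarith
  have hmin : min α (2 * δ) = 2 * ℓ := by rw [hℓdef]; ring
  have hξ' : ξ₁ = Filter.atTop.liminf
      (fun N : ℕ => ((Aset19 Z α ε K₀ p N).ncard : ℝ) / N) := hξ₁
  -- the goal in terms of Gset19
  show ξ₁ * α⁻¹ * min α (2 * δ) ≤ Filter.atTop.liminf
    (fun T : ℝ => (volume (Gset19 Z ε K f T)).toReal / T)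
  -- pointwise approximation lemma
  have hGood : ∀ n : ℕ, (∀ s ∈ K₀,
      ‖Z (s + (((n : ℝ) * α : ℝ) : ℂ) * Complex.I)
        - Complex.exp (p.eval s)‖ < ε / 2) →
      ∀ t : ℝ, |t - (n : ℝ) * α| ≤ ℓ → ∀ s ∈ K,
        ‖Z (s + (t : ℂ) * Complex.I) - f s‖ < ε := by
    intro n hPn t ht s hs
    set τ : ℝ := t - (n : ℝ) * α with hτ
    have hτδ : |τ| ≤ δ := le_trans ht hℓδ
    have hsτK₀ : s + (τ : ℂ) * Complex.I ∈ K₀ := by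
      by_contra hcon
      have h := hdist s hs _ hcon
      rw [Complex.dist_eq] at h
      have heq : s - (s + (τ : ℂ) * Complex.I) = -((τ : ℂ) * Complex.I) := by ring
      rw [heq, norm_neg, norm_mul, Complex.norm_I, Complex.norm_real, Real.norm_eq_abs, mul_one] at h
      linarith [hτδ]
    have key : s + (t : ℂ) * Complex.I
        = (s + (τ : ℂ) * Complex.I) + (((n : ℝ) * α : ℝ) : ℂ) * Complex.I := by
      have : (t : ℂ) = (τ : ℂ) + (((n : ℝ) * α : ℝ) : ℂ) := by
        rw [hτ]; push_cast; ring
      rw [this]; ring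
    have h1 := hPn _ hsτK₀
    have h2 := hp2 τ hτδ s hs
    have h3 := hp1 s hs
    rw [key]
    have t1 := norm_sub_le_norm_sub_add_norm_sub
      (Z ((s + (τ : ℂ) * Complex.I) + (((n : ℝ) * α : ℝ) : ℂ) * Complex.I))
      (Complex.exp (p.eval (s + (τ : ℂ) * Complex.I))) (f s)
    have t2 := norm_sub_le_norm_sub_add_norm_sub
      (Complex.exp (p.eval (s + (τ : ℂ) * Complex.I))) (Complex.exp (p.eval s)) (f s)
    linarith
  -- measure lower bound lemma
  have hmeas : ∀ T : ℝ, ℓ ≤ T →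
      2 * ℓ * ((Aset19 Z α ε K₀ p ⌊(T - ℓ) / α⌋₊).ncard : ℝ)
        ≤ (volume (Gset19 Z ε K f T)).toReal := by
    intro T hTℓ
    set N : ℕ := ⌊(T - ℓ) / α⌋₊ with hN
    have hfin : (Aset19 Z α ε K₀ p N).Finite :=
      (Set.finite_Icc 1 N).subset (fun n hn => ⟨hn.1, hn.2.1⟩)
    set F : Finset ℕ := hfin.toFinset with hF
    have hNα : (N : ℝ) * α ≤ T - ℓ := by
      have h0 : (0 : ℝ) ≤ (T - ℓ) / α := div_nonneg (by linarith) hα.le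
      have h1 : (N : ℝ) ≤ (T - ℓ) / α := Nat.floor_le h0
      have := mul_le_mul_of_nonneg_right h1 hα.le
      rwa [div_mul_cancel₀ _ hα.ne'] at this
    have hsub : (⋃ n ∈ F, Set.Ico ((n : ℝ) * α - ℓ) ((n : ℝ) * α + ℓ))
        ⊆ Gset19 Z ε K f T := by
      intro t ht
      simp only [Set.mem_iUnion, Set.mem_Ico, exists_prop] at ht
      obtain ⟨n, hnF, hta, htb⟩ := ht
      obtain ⟨hn1, hnN, hPn⟩ := hfin.mem_toFinset.mp hnF
      have h1n : (1 : ℝ) ≤ (n : ℝ) := by exact_mod_cast hn1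
      have hnNr : (n : ℝ) ≤ (N : ℝ) := by exact_mod_cast hnN
      refine ⟨?_, ?_, ?_⟩
      · nlinarith
      · nlinarith
      · exact hGood n hPn t (by rw [abs_le]; constructor <;> linarith) 
    have hdisj : (↑F : Set ℕ).PairwiseDisjoint
        (fun n : ℕ => Set.Ico ((n : ℝ) * α - ℓ) ((n : ℝ) * α + ℓ)) := by
      intro m _ n _ hmn
      have hkey : ∀ a b : ℕ, a < b → Disjoint (Set.Ico ((a : ℝ) * α - ℓ) ((a : ℝ) * α + ℓ))
          (Set.Ico ((b : ℝ) * α - ℓ) ((b : ℝ) * α + ℓ)) := by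
        intro a b hab
        rw [Set.Ico_disjoint_Ico]
        have hab1 : (a : ℝ) + 1 ≤ (b : ℝ) := by exact_mod_cast hab
        calc min ((a : ℝ) * α + ℓ) ((b : ℝ) * α + ℓ) ≤ (a : ℝ) * α + ℓ := min_le_left _ _
          _ ≤ (b : ℝ) * α - ℓ := by nlinarith
          _ ≤ max ((a : ℝ) * α - ℓ) ((b : ℝ) * α - ℓ) := le_max_right _ _
      rcases lt_or_gt_of_ne hmn with h | h
      · exact hkey m n h
      · exact (hkey n m h).symm
    have hμU : volume (⋃ n ∈ F, Set.Ico ((n : ℝ) * α - ℓ) ((n : ℝ) * α + ℓ))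
        = (F.card : ℝ≥0∞) * ENNReal.ofReal (2 * ℓ) := by
      rw [measure_biUnion_finset hdisj (fun n _ => measurableSet_Ico)]
      have hvols : ∀ n ∈ F, volume (Set.Ico ((n : ℝ) * α - ℓ) ((n : ℝ) * α + ℓ))
          = ENNReal.ofReal (2 * ℓ) := by
        intro n _
        rw [Real.volume_Ico]
        congr 1
        ring
      rw [Finset.sum_congr rfl hvols, Finset.sum_const, nsmul_eq_mul]
    have hGsub : Gset19 Z ε K f T ⊆ Set.Icc 0 T := fun t ht => ⟨ht.1, ht.2.1⟩
    have hne : volume (Gset19 Z ε K f T) ≠ ⊤ := by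
      refine ((lt_of_le_of_lt (measure_mono hGsub) ?_)).ne
      rw [Real.volume_Icc]
      exact ENNReal.ofReal_lt_top
    have hle : (F.card : ℝ≥0∞) * ENNReal.ofReal (2 * ℓ) ≤ volume (Gset19 Z ε K f T) := by
      rw [← hμU]; exact measure_mono hsub
    have hto := ENNReal.toReal_mono hne hle
    rw [ENNReal.toReal_mul, ENNReal.toReal_natCast,
      ENNReal.toReal_ofReal (by linarith)] at hto
    have hcard : (Aset19 Z α ε K₀ p N).ncard = F.card :=
      Set.ncard_eq_toFinset_card _ hfin
    rw [hcard]
    linarith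
  -- basic bounds on the discrete densities
  have hcardle : ∀ N : ℕ, (Aset19 Z α ε K₀ p N).ncard ≤ N := by
    intro N
    have h1 : Aset19 Z α ε K₀ p N ⊆ ↑(Finset.Icc 1 N) := by
      intro n hn
      simp only [Finset.coe_Icc, Set.mem_Icc]
      exact ⟨hn.1, hn.2.1⟩
    calc (Aset19 Z α ε K₀ p N).ncard ≤ (↑(Finset.Icc 1 N) : Set ℕ).ncard :=
          Set.ncard_le_ncard h1 (Finset.Icc 1 N).finite_toSet
      _ = (Finset.Icc 1 N).card := Set.ncard_coe_finset _
      _ ≤ N := by rw [Nat.card_Icc]; omega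
  have h_a_nonneg : ∀ N : ℕ, 0 ≤ ((Aset19 Z α ε K₀ p N).ncard : ℝ) / N :=
    fun N => div_nonneg (Nat.cast_nonneg _) (Nat.cast_nonneg _)
  have h_a_le_one : ∀ N : ℕ, ((Aset19 Z α ε K₀ p N).ncard : ℝ) / N ≤ 1 := by
    intro N
    rcases Nat.eq_zero_or_pos N with h | h
    · simp [h]
    · rw [div_le_one (by exact_mod_cast h)]
      exact_mod_cast hcardle N
  have hbddA : IsBoundedUnder (· ≥ ·) atTop
      (fun N : ℕ => ((Aset19 Z α ε K₀ p N).ncard : ℝ) / N) :=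
    isBoundedUnder_of ⟨0, h_a_nonneg⟩
  have hcobddA : IsCoboundedUnder (· ≥ ·) atTop
      (fun N : ℕ => ((Aset19 Z α ε K₀ p N).ncard : ℝ) / N) :=
    (isBoundedUnder_of ⟨1, h_a_le_one⟩).isCoboundedUnder_ge
  have hξnn : 0 ≤ ξ₁ := by
    rw [hξ']
    exact le_liminf_of_le hcobddA (Eventually.of_forall h_a_nonneg)
  have hξle1 : ξ₁ ≤ 1 := by
    rw [hξ']
    exact liminf_le_of_frequently_le (Frequently.of_forall h_a_le_one) hbddA
  -- bounds for the continuous density function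
  have h_b_ev_nonneg : ∀ᶠ T in (atTop : Filter ℝ),
      0 ≤ (volume (Gset19 Z ε K f T)).toReal / T := by
    filter_upwards [eventually_ge_atTop (1 : ℝ)] with T hT
    exact div_nonneg ENNReal.toReal_nonneg (by linarith)
  have h_b_ev_le_one : ∀ᶠ T in (atTop : Filter ℝ),
      (volume (Gset19 Z ε K f T)).toReal / T ≤ 1 := by
    filter_upwards [eventually_ge_atTop (1 : ℝ)] with T hT
    have hGsub : Gset19 Z ε K f T ⊆ Set.Icc 0 T := fun t ht => ⟨ht.1, ht.2.1⟩
    have h1 : (volume (Gset19 Z ε K f T)).toReal ≤ T := by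
      have h2 : volume (Gset19 Z ε K f T) ≤ ENNReal.ofReal T := by
        refine le_trans (measure_mono hGsub) ?_
        rw [Real.volume_Icc, sub_zero]
      calc (volume (Gset19 Z ε K f T)).toReal ≤ (ENNReal.ofReal T).toReal :=
            ENNReal.toReal_mono ENNReal.ofReal_ne_top h2
        _ = T := ENNReal.toReal_ofReal (by linarith)
    rw [div_le_one (by linarith)]
    exact h1
  have hcobddB : IsCoboundedUnder (· ≥ ·) atTop
      (fun T : ℝ => (volume (Gset19 Z ε K f T)).toReal / T) :=
    IsBoundedUnder.isCoboundedUnder_ge ⟨1, by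
      rw [eventually_map]; exact h_b_ev_le_one⟩
  have hliminfb_nonneg : 0 ≤ Filter.atTop.liminf
      (fun T : ℝ => (volume (Gset19 Z ε K f T)).toReal / T) :=
    le_liminf_of_le hcobddB h_b_ev_nonneg
  -- main estimate
  rw [hmin]
  refine le_of_forall_sub_le ?_
  intro η₀ hη₀
  set η : ℝ := η₀ / 2 with hηdef
  have hη : 0 < η := by rw [hηdef]; linarith
  have hsuff : ξ₁ * α⁻¹ * (2 * ℓ) - 2 * η ≤ Filter.atTop.liminf
      (fun T : ℝ => (volume (Gset19 Z ε K f T)).toReal / T) → 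
      ξ₁ * α⁻¹ * (2 * ℓ) - η₀ ≤ Filter.atTop.liminf
      (fun T : ℝ => (volume (Gset19 Z ε K f T)).toReal / T) := by
    intro h; rw [hηdef] at h; linarith
  apply hsuff
  have hαinv : (0 : ℝ) < α⁻¹ := inv_pos.mpr hα
  have hαinvα : α⁻¹ * α = 1 := inv_mul_cancel₀ hα.ne'
  have h2ℓαinv : 2 * ℓ * α⁻¹ ≤ 1 := by
    have := mul_le_mul_of_nonneg_right hℓα hαinv.le
    rw [mul_comm α α⁻¹] at this
    linarith
  have h2ℓαinv0 : 0 ≤ 2 * ℓ * α⁻¹ := by positivity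
  rcases lt_or_ge ξ₁ η with hcase | hcase
  · -- ξ₁ < η : trivial since liminf ≥ 0
    have hL : ξ₁ * α⁻¹ * (2 * ℓ) ≤ ξ₁ := by
      have h1 : ξ₁ * (2 * ℓ * α⁻¹) ≤ ξ₁ * 1 := mul_le_mul_of_nonneg_left h2ℓαinv hξnn
      calc ξ₁ * α⁻¹ * (2 * ℓ) = ξ₁ * (2 * ℓ * α⁻¹) := by ring
        _ ≤ ξ₁ * 1 := h1
        _ = ξ₁ := mul_one _
    linarith
  · -- η ≤ ξ₁ : the real argument
    have hη1 : η ≤ 1 := le_trans hcase hξle1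
    -- eventual lower bound on the discrete density
    have hevN : ∀ᶠ N in (atTop : Filter ℕ),
        ξ₁ - η < ((Aset19 Z α ε K₀ p N).ncard : ℝ) / N := by
      refine eventually_lt_of_lt_liminf ?_ hbddA
      rw [← hξ']
      linarith
    obtain ⟨N₀, hN₀⟩ := eventually_atTop.mp hevN
    have htend : Tendsto (fun T : ℝ => (T - ℓ) / α) atTop atTop := by
      apply Tendsto.atTop_div_const hα
      simpa [sub_eq_add_neg] using tendsto_atTop_add_const_right atTop (-ℓ) tendsto_id
    have hNT : Tendsto (fun T : ℝ => ⌊(T - ℓ) / α⌋₊) atTop atTop :=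
      tendsto_nat_floor_atTop.comp htend
    have hmain : ∀ᶠ T in (atTop : Filter ℝ), ξ₁ * α⁻¹ * (2 * ℓ) - 2 * η
        ≤ (volume (Gset19 Z ε K f T)).toReal / T := by
      filter_upwards [eventually_ge_atTop (1 : ℝ), eventually_ge_atTop ℓ,
        eventually_ge_atTop ((ℓ + α) / η), hNT.eventually_ge_atTop (max N₀ 1)]
        with T hT1 hTℓ hTη hTN
      set N : ℕ := ⌊(T - ℓ) / α⌋₊ with hNdef
      have hN1 : 1 ≤ N := le_trans (le_max_right N₀ 1) hTN
      have hNN₀ : N₀ ≤ N := le_trans (le_max_left N₀ 1) hTN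
      have hT0 : (0 : ℝ) < T := by linarith
      have hNpos : (0 : ℝ) < (N : ℝ) := by exact_mod_cast hN1
      have haN : ξ₁ - η < ((Aset19 Z α ε K₀ p N).ncard : ℝ) / N := hN₀ N hNN₀
      have hc : (ξ₁ - η) * (N : ℝ) ≤ ((Aset19 Z α ε K₀ p N).ncard : ℝ) :=
        le_of_lt ((lt_div_iff₀ hNpos).mp haN)
      have hvol : 2 * ℓ * ((Aset19 Z α ε K₀ p N).ncard : ℝ)
          ≤ (volume (Gset19 Z ε K f T)).toReal := hmeas T hTℓ
      have hfloor : (T - ℓ) / α - 1 < (N : ℝ) := Nat.sub_one_lt_floor _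
      have hTη' : ℓ + α ≤ η * T := by
        rw [div_le_iff₀ hη] at hTη
        linarith
      have h6 : T - ℓ - α < (N : ℝ) * α := by
        have := mul_lt_mul_of_pos_right hfloor hα
        rwa [sub_mul, div_mul_cancel₀ _ hα.ne', one_mul] at this
      have h5 : (1 - η) / α ≤ (N : ℝ) / T := by
        rw [div_le_div_iff₀ hα hT0]
        nlinarith
      have hξη : 0 ≤ ξ₁ - η := by linarith
      have h7 : 2 * ℓ * (ξ₁ - η) * ((1 - η) / α)
          ≤ (volume (Gset19 Z ε K f T)).toReal / T := by
        have step1 : 2 * ℓ * (ξ₁ - η) * ((1 - η) / α) ≤ 2 * ℓ * (ξ₁ - η) * ((N : ℝ) / T) :=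
          mul_le_mul_of_nonneg_left h5 (by positivity)
        have step2 : 2 * ℓ * (ξ₁ - η) * ((N : ℝ) / T)
            = (2 * ℓ * ((ξ₁ - η) * (N : ℝ))) / T := by ring
        have step3 : (2 * ℓ * ((ξ₁ - η) * (N : ℝ))) / T
            ≤ (2 * ℓ * ((Aset19 Z α ε K₀ p N).ncard : ℝ)) / T := by
          exact (div_le_div_iff_of_pos_right hT0).mpr (mul_le_mul_of_nonneg_left hc (by linarith))
        have step4 : (2 * ℓ * ((Aset19 Z α ε K₀ p N).ncard : ℝ)) / T
            ≤ (volume (Gset19 Z ε K f T)).toReal / T :=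
          (div_le_div_iff_of_pos_right hT0).mpr hvol
        calc 2 * ℓ * (ξ₁ - η) * ((1 - η) / α) ≤ 2 * ℓ * (ξ₁ - η) * ((N : ℝ) / T) := step1
          _ = (2 * ℓ * ((ξ₁ - η) * (N : ℝ))) / T := step2
          _ ≤ (2 * ℓ * ((Aset19 Z α ε K₀ p N).ncard : ℝ)) / T := step3
          _ ≤ (volume (Gset19 Z ε K f T)).toReal / T := step4
      -- arithmetic: ξ₁·α⁻¹·2ℓ − 2η ≤ 2ℓ(ξ₁−η)(1−η)/α
      have h3' : ξ₁ + 1 - η ≤ 2 := by linarith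
      have h4' : 0 ≤ ξ₁ + 1 - η := by linarith
      have key2 : (2 * ℓ * α⁻¹) * (ξ₁ + 1 - η) ≤ 1 * 2 :=
        mul_le_mul h2ℓαinv h3' h4' zero_le_one
      have key3 : η * ((2 * ℓ * α⁻¹) * (ξ₁ + 1 - η)) ≤ η * (1 * 2) :=
        mul_le_mul_of_nonneg_left key2 hη.le
      have harith : ξ₁ * α⁻¹ * (2 * ℓ) - 2 * η ≤ 2 * ℓ * (ξ₁ - η) * ((1 - η) / α) := by
        rw [div_eq_mul_inv]
        nlinarith [key3]
      linarith
    exact le_liminf_of_le hcobddB hmain
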